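/- Let A be an n×n symmetric irreducible matrix whose comparison matrix Ā is positive semidefinite, and let d > 0 satisfy Ā d ≥ 0. If Ā d ≠ 0 (i.e., Ā d has at least one positive component), then Ā is positive definite. -/

import Mathlib

open Matrix

/-- The comparison matrix of a square matrix. -/
def comparisonMatrix {n : Type*} [DecidableEq n] (M : Matrix n n ℝ) : Matrix n n ℝ :=
  fun i j => if i = j then M i i else -|M i j|

/-- A matrix is irreducible iff any two distinct indices are connected by a chain
of nonzero entries. -/
def MatrixIrreducible {n : Type*} (A : Matrix n n ℝ) : Prop :=
  ∀ i j : n, i ≠ j → Relation.TransGen (fun a b => A a b ≠ 0) i j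

theorem irreducible_comparison_posDef_of_ne_zero
    {n : ℕ} (A : Matrix (Fin n) (Fin n) ℝ) (hsym : A.IsSymm)
    (hirr : MatrixIrreducible A)
    (hcmp : (comparisonMatrix A).PosSemidef)
    (d : Fin n → ℝ) (hd : ∀ i, 0 < d i)
    (hAd : ∀ i, 0 ≤ (comparisonMatrix A).mulVec d i)
    (hne : (comparisonMatrix A).mulVec d ≠ 0) :
    (comparisonMatrix A).PosDef := by
  set B := comparisonMatrix A with hB
  refine posDef_iff_dotProduct_mulVec.mpr ⟨hcmp.1, fun x hx => ?_⟩
  -- it suffices to rule out a kernel vector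
  rcases lt_or_eq_of_le (hcmp.dotProduct_mulVec_nonneg x) with h | h
  · simpa using h
  exfalso
  have hBx : B *ᵥ x = 0 := by
    rw [← hcmp.dotProduct_mulVec_zero_iff x]
    simpa using h.symm
  -- expand mulVec entries
  have hBe : ∀ (v : Fin n → ℝ) (i : Fin n),
      (B *ᵥ v) i = A i i * v i - ∑ j ∈ Finset.univ.erase i, |A i j| * v j := by
    intro v i
    have hsum : (∑ j : Fin n, B i j * v j)
        = B i i * v i + ∑ j ∈ Finset.univ.erase i, B i j * v j :=
      (Finset.add_sum_erase Finset.univ (fun j => B i j * v j) (Finset.mem_univ i)).symm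
    have h1 : B i i = A i i := by simp [hB, comparisonMatrix]
    have h2 : ∀ j ∈ Finset.univ.erase i, B i j * v j = -(|A i j| * v j) := by
      intro j hj
      have hji : j ≠ i := Finset.ne_of_mem_erase hj
      simp [hB, comparisonMatrix, (Ne.symm hji : ¬ i = j), neg_mul]
    rw [Matrix.mulVec, dotProduct, hsum, h1, Finset.sum_congr rfl h2,
      Finset.sum_neg_distrib]
    ring
  -- the maximum of |x i| / d i
  obtain ⟨j0, hxj0⟩ : ∃ j, x j ≠ 0 := Function.ne_iff.mp hx
  have hne' : (Finset.univ : Finset (Fin n)).Nonempty := ⟨j0, Finset.mem_univ j0⟩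
  obtain ⟨i0, -, hi0⟩ := Finset.exists_max_image Finset.univ (fun i => |x i| / d i) hne'
  set c : ℝ := |x i0| / d i0 with hc
  have hcbound : ∀ j, |x j| ≤ c * d j := by
    intro j
    have := hi0 j (Finset.mem_univ j)
    exact (div_le_iff₀ (hd j)).mp this
  have hcpos : 0 < c := by
    have h1 : 0 < |x j0| := abs_pos.mpr hxj0
    have h2 := hcbound j0
    nlinarith [hd j0]
  have hmem0 : |x i0| = c * d i0 := by
    rw [hc, div_mul_cancel₀ _ (hd i0).ne']
  -- key step: at a maximal index, (B d) i = 0 and neighbors are maximal too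
  have key : ∀ i, |x i| = c * d i →
      (B *ᵥ d) i = 0 ∧ ∀ j, A i j ≠ 0 → |x j| = c * d j := by
    intro i hi
    set σ : ℝ := if 0 ≤ x i then 1 else -1 with hσ
    have habsσ : |σ| = 1 := by
      rw [hσ]; split <;> simp
    have hσx : σ * x i = |x i| := by
      rw [hσ]; split
      · rw [abs_of_nonneg ‹_›]; ring
      · rw [abs_of_neg (lt_of_not_ge ‹_›)]; ring
    have hσle : ∀ j, σ * x j ≤ c * d j := by
      intro j
      calc σ * x j ≤ |σ * x j| := le_abs_self _
      _ = |x j| := by rw [abs_mul, habsσ, one_mul]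
      _ ≤ c * d j := hcbound j
    set E := Finset.univ.erase i with hE
    set s3 : ℝ := ∑ j ∈ E, |A i j| * (c * d j - σ * x j) with hs3
    have hterm : ∀ j ∈ E, 0 ≤ |A i j| * (c * d j - σ * x j) := by
      intro j _
      exact mul_nonneg (abs_nonneg _) (by linarith [hσle j])
    have hs3nn : 0 ≤ s3 := Finset.sum_nonneg hterm
    -- compute s3 = - c * (B d) i
    have hx0 : (B *ᵥ x) i = 0 := by rw [hBx]; rfl
    have e1 : A i i * x i - ∑ j ∈ E, |A i j| * x j = 0 := by rw [← hBe x i]; exact hx0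
    have e2 : (B *ᵥ d) i = A i i * d i - ∑ j ∈ E, |A i j| * d j := hBe d i
    have hsplit : s3 = c * (∑ j ∈ E, |A i j| * d j) - σ * (∑ j ∈ E, |A i j| * x j) := by
      rw [hs3, Finset.mul_sum, Finset.mul_sum, ← Finset.sum_sub_distrib]
      exact Finset.sum_congr rfl fun j _ => by ring
    have hs1 : (∑ j ∈ E, |A i j| * x j) = A i i * x i := by linarith
    have hσs1 : σ * (∑ j ∈ E, |A i j| * x j) = A i i * (c * d i) := by
      rw [hs1, ← hi, ← hσx]; ring
    have hs3eq : s3 = -(c * ((B *ᵥ d) i)) := by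
      rw [hsplit, hσs1]
      have : c * (∑ j ∈ E, |A i j| * d j) = c * (A i i * d i) - c * ((B *ᵥ d) i) := by
        rw [e2]; ring
      rw [this]; ring
    have hBdi : (B *ᵥ d) i = 0 := by
      have h1 := hAd i
      nlinarith
    refine ⟨hBdi, fun j hAij => ?_⟩
    by_cases hji : j = i
    · rw [hji]; exact hi
    · have hjE : j ∈ E := Finset.mem_erase.mpr ⟨hji, Finset.mem_univ j⟩
      have hs3z : s3 = 0 := by rw [hs3eq, hBdi]; ring
      have := (Finset.sum_eq_zero_iff_of_nonneg hterm).mp hs3z.symm.symm j hjE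
      have habs : |A i j| ≠ 0 := abs_ne_zero.mpr hAij
      have hzero : c * d j - σ * x j = 0 := by
        rcases mul_eq_zero.mp this with h' | h'
        · exact absurd h' habs
        · exact h'
      have h1 : σ * x j = c * d j := by linarith
      have h2 : σ * x j ≤ |x j| := by
        calc σ * x j ≤ |σ * x j| := le_abs_self _
        _ = |x j| := by rw [abs_mul, habsσ, one_mul]
      have h3 := hcbound j
      linarith
  -- propagate maximality from i0 to everywhere via irreducibility
  have hall : ∀ k, |x k| = c * d k := by
    intro k
    by_cases hk : k = i0
    · rw [hk]; exact hmem0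
    · have htg := hirr i0 k (Ne.symm hk)
      clear hk
      induction htg with
      | single h => exact (key i0 hmem0).2 _ h
      | tail _ h ih => exact (key _ ih).2 _ h
  -- hence B d = 0, contradiction
  apply hne
  funext k
  exact (key k (hall k)).1
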